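/- Fix n > 3. For each i : Fin n let V_i be the permutation of states (Fin n → ZMod 2) that leaves the state unchanged when y_{i−1} = y_{i+1} = 0 and replaces y_i by y_i + 1 otherwise (the Wolfram rule 54 local function at i; each V_i is an involution). Then the orbits of the subgroup of the permutation group of (Fin n → ZMod 2) generated by {V_i ∣ i : Fin n} are exactly the singleton {0} consisting of the all-zero state, and the set of all remaining 2^n − 1 states; in particular there are exactly 2 orbits. -/

import Mathlib

/-- The orbits of the dynamics group of Wolfram rule 54 are exactly
the singleton of the all-zero state and the set of all other states; in
particular there are exactly 2 orbits. -/
theorem stmt_14 {n : ℕ} [NeZero n] (hn : 3 < n)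
    (V : Fin n → Equiv.Perm (Fin n → ZMod 2))
    (hV : ∀ (i : Fin n) (y : Fin n → ZMod 2),
      V i y = if y (i - 1) = 0 ∧ y (i + 1) = 0
        then y else Function.update y i (y i + 1)) :
    MulAction.orbit ↥(Subgroup.closure (Set.range V)) (0 : Fin n → ZMod 2)
        = {0} ∧
    (∀ y : Fin n → ZMod 2, y ≠ 0 →
      MulAction.orbit ↥(Subgroup.closure (Set.range V)) y
        = {z : Fin n → ZMod 2 | z ≠ 0}) ∧
    Nat.card (Quotient (MulAction.orbitRel
        ↥(Subgroup.closure (Set.range V)) (Fin n → ZMod 2))) = 2 := by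
  classical
  set G := Subgroup.closure (Set.range V) with hG
  have two1 : ∀ a : ZMod 2, a ≠ 0 → a = 1 := by decide
  have hmem : ∀ i, V i ∈ G := fun i => Subgroup.subset_closure ⟨i, rfl⟩
  have hstep : ∀ (i) (y : Fin n → ZMod 2), V i y ∈ MulAction.orbit G y :=
    fun i y => ⟨⟨V i, hmem i⟩, rfl⟩
  -- the all-zero state is fixed by every generator
  have hV0 : ∀ i, V i (0 : Fin n → ZMod 2) = 0 := by
    intro i; rw [hV]; simp
  have horb0 : MulAction.orbit G (0 : Fin n → ZMod 2) = {0} := by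
    apply Set.eq_singleton_iff_unique_mem.mpr
    refine ⟨MulAction.mem_orbit_self 0, ?_⟩
    rintro z ⟨g, rfl⟩
    have : ∀ (g : Equiv.Perm (Fin n → ZMod 2)), g ∈ G → g 0 = 0 := by
      intro g hg
      induction hg using Subgroup.closure_induction with
      | mem x hx => obtain ⟨i, rfl⟩ := hx; exact hV0 i
      | one => rfl
      | mul x y hx hy px py => rw [Equiv.Perm.mul_apply, py, px]
      | inv x hx px => exact x.injective (by rw [← Equiv.Perm.mul_apply, mul_inv_cancel, Equiv.Perm.one_apply, px])
    exact this g.1 g.2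
  -- spawn: a 1 can create a 1 to its right
  have spawn : ∀ (i : Fin n) (y : Fin n → ZMod 2), y i ≠ 0 → y (i + 1) = 0 →
      V (i + 1) y = Function.update y (i + 1) 1 := by
    intro i y hi hi1
    rw [hV]
    rw [add_sub_cancel_right]
    rw [if_neg (by tauto)]
    rw [hi1, zero_add]
  -- boundary: a nonzero, non-all-ones state has a 1 followed by a 0
  have boundary : ∀ y : Fin n → ZMod 2, y ≠ 0 → y ≠ (fun _ => 1) →
      ∃ i, y i ≠ 0 ∧ y (i + 1) = 0 := by
    intro y hy hAll
    by_contra h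
    push_neg at h
    obtain ⟨j, hj⟩ : ∃ j, y j ≠ 0 := by
      by_contra h'
      push_neg at h'
      exact hy (funext fun k => h' k)
    open Fin.NatCast in
    have hall : ∀ m : ℕ, y (j + m) ≠ 0 := by
      intro m
      induction m with
      | zero => simpa using hj
      | succ m ih =>
        have := h _ ih
        have e : j + ((m : Fin n) + 1) = j + (m + 1 : ℕ) := by push_cast; ring
        rw [← add_assoc] at e
        rwa [← e]
    apply hAll
    funext k
    open Fin.NatCast in
    have := hall (k - j).val
    rw [Fin.cast_val_eq_self] at this
    have e : j + (k - j) = k := by abel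
    rw [e] at this
    exact two1 _ this
  -- key: the all-ones state is in the orbit of every nonzero state
  have key : ∀ (k : ℕ) (y : Fin n → ZMod 2), y ≠ 0 →
      n - (Finset.univ.filter fun j => y j ≠ 0).card ≤ k →
      (fun _ => (1 : ZMod 2)) ∈ MulAction.orbit G y := by
    intro k
    induction k with
    | zero =>
      intro y hy hk
      have hle : (Finset.univ.filter fun j => y j ≠ 0).card ≤ n := by
        simpa using Finset.card_filter_le Finset.univ fun j => y j ≠ 0
      have hcard : (Finset.univ.filter fun j => y j ≠ 0).card = n := by omega
      have hfull : (Finset.univ.filter fun j => y j ≠ 0) = Finset.univ :=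
        Finset.eq_univ_of_card _ (by rw [Fintype.card_fin]; exact hcard)
      have : y = fun _ => 1 := by
        funext j
        have : j ∈ Finset.univ.filter fun j => y j ≠ 0 := by
          rw [hfull]; exact Finset.mem_univ j
        exact two1 _ (Finset.mem_filter.mp this).2
      rw [this]
      exact MulAction.mem_orbit_self _
    | succ k ih =>
      intro y hy hk
      by_cases hAll : y = fun _ => 1
      · rw [hAll]; exact MulAction.mem_orbit_self _
      · obtain ⟨i, hi1, hi0⟩ := boundary y hy hAll
        set y' := Function.update y (i + 1) (1 : ZMod 2) with hy'def
        have hVy : V (i + 1) y = y' := spawn i y hi1 hi0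
        have horb : y' ∈ MulAction.orbit G y := hVy ▸ hstep _ _
        have hne : y' ≠ 0 := by
          intro h0
          have := congrFun h0 (i + 1)
          rw [hy'def, Function.update_self] at this
          exact one_ne_zero this
        have hfil : (Finset.univ.filter fun j => y' j ≠ 0)
            = insert (i + 1) (Finset.univ.filter fun j => y j ≠ 0) := by
          ext j
          by_cases hj : j = i + 1
          · subst hj
            simp [hy'def]
          · simp [hy'def, Function.update_of_ne hj, hj]
        have hnotmem : (i + 1) ∉ (Finset.univ.filter fun j => y j ≠ 0) := by
          simp [hi0]
        have hcard' : (Finset.univ.filter fun j => y' j ≠ 0).card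
            = (Finset.univ.filter fun j => y j ≠ 0).card + 1 := by
          rw [hfil, Finset.card_insert_of_notMem hnotmem]
        have hlt : (Finset.univ.filter fun j => y j ≠ 0).card < n := by
          have : (Finset.univ.filter fun j => y j ≠ 0) ⊂ Finset.univ :=
            Finset.ssubset_univ_iff.mpr
              (fun h => hnotmem (by rw [h]; exact Finset.mem_univ _))
          simpa using Finset.card_lt_card this
        have := ih y' hne (by omega)
        rwa [← MulAction.orbit_eq_iff.mpr horb]
  have hone_ne : (fun _ => (1 : ZMod 2)) ≠ (0 : Fin n → ZMod 2) := by
    intro h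
    have := congrFun h ⟨0, Nat.pos_of_ne_zero (NeZero.ne n)⟩
    exact one_ne_zero this
  have key' : ∀ y : Fin n → ZMod 2, y ≠ 0 →
      (fun _ => (1 : ZMod 2)) ∈ MulAction.orbit G y :=
    fun y hy => key n y hy (by omega)
  -- orbit of all-ones = nonzero states
  have horb1 : MulAction.orbit G (fun _ => (1 : ZMod 2)) = {z : Fin n → ZMod 2 | z ≠ 0} := by
    ext z
    constructor
    · intro hz h0
      subst h0
      have : (fun _ => (1 : ZMod 2)) ∈ MulAction.orbit G (0 : Fin n → ZMod 2) :=
        MulAction.mem_orbit_symm.mp hz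
      rw [horb0] at this
      exact hone_ne this
    · intro hz
      exact MulAction.mem_orbit_symm.mp (key' z hz)
  have horbne : ∀ y : Fin n → ZMod 2, y ≠ 0 →
      MulAction.orbit G y = {z : Fin n → ZMod 2 | z ≠ 0} := by
    intro y hy
    rw [← MulAction.orbit_eq_iff.mpr (key' y hy), horb1]
  refine ⟨horb0, horbne, ?_⟩
  rw [Nat.card_eq_two_iff]
  refine ⟨Quotient.mk _ (0 : Fin n → ZMod 2), Quotient.mk _ (fun _ => (1 : ZMod 2)), ?_, ?_⟩
  · intro h
    have h2 : (0 : Fin n → ZMod 2) ∈ MulAction.orbit (↥G) (fun _ => (1 : ZMod 2)) :=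
      MulAction.orbitRel_apply.mp (Quotient.exact h)
    rw [horb1] at h2
    exact h2 rfl
  · apply Set.eq_univ_iff_forall.mpr
    intro q
    induction q using Quotient.ind with
    | _ y =>
      by_cases hy : y = 0
      · left; subst hy; rfl
      · right
        exact Quotient.sound (MulAction.orbitRel_apply.mpr (by rw [horb1]; exact hy))
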